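/- arXiv:2203.17160 — 3 statements merged into one kernel-verified Lean document; each statement's English description precedes it below -/
import Mathlib

section
/- The two-dimensional Lebesgue area of the intersection of the set C = {y ∈ ℝ⁴ : |y₁/√2 + y₃/√2| + |y₂/√2 − y₄/√2| + |(y₁−y₂−y₃−y₄)/2| + |(y₁+y₂−y₃+y₄)/2| ≤ 1} with the coordinate plane span(e₁,e₂) equals 8/(4+3√2) = 12√2 − 16. -/
open Real MeasureTheory

open intervalIntegral in
private lemma lin_int (p q a b : ℝ) :
    ∫ x in a..b, (p + q * x) = p * (b - a) + q * ((b ^ 2 - a ^ 2) / 2) := by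
  rw [intervalIntegral.integral_add (g := fun x => q * x) (intervalIntegrable_const)
    ((continuous_const.mul continuous_id').intervalIntegrable _ _),
    intervalIntegral.integral_const, intervalIntegral.integral_const_mul, integral_id]
  simp [smul_eq_mul]
  ring

private lemma habs (x y : ℝ) : |x - y| + |x + y| = 2 * max |x| |y| := by
  obtain h1 | h1 := abs_cases (x - y) <;> obtain h2 | h2 := abs_cases (x + y) <;>
    obtain h3 | h3 := abs_cases x <;> obtain h4 | h4 := abs_cases y <;>
    obtain h5 | h5 := max_cases |x| |y| <;>
    linarith [h1.1, h2.1, h3.1, h4.1, h5.1, h1.2, h2.2, h3.2, h4.2, h5.2]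

set_option maxHeartbeats 1000000 in
theorem stmt_3 :
    volume {p : ℝ × ℝ |
      |p.1 / Real.sqrt 2 + 0 / Real.sqrt 2| + |p.2 / Real.sqrt 2 - 0 / Real.sqrt 2|
        + |(p.1 - p.2 - 0 - 0) / 2| + |(p.1 + p.2 - 0 + 0) / 2| ≤ 1}
      = ENNReal.ofReal (8 / (4 + 3 * Real.sqrt 2)) ∧
    (8 : ℝ) / (4 + 3 * Real.sqrt 2) = 12 * Real.sqrt 2 - 16 := by
  set s : ℝ := Real.sqrt 2 with hsdef
  have hs : s ^ 2 = 2 := Real.sq_sqrt (by norm_num)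
  have hs0 : 0 < s := Real.sqrt_pos.mpr (by norm_num)
  have hs1 : 1 < s := by nlinarith
  have hs2 : s < 3/2 := by nlinarith
  have hval : (8 : ℝ) / (4 + 3 * s) = 12 * s - 16 := by
    rw [div_eq_iff (by nlinarith)]
    linear_combination (-36 : ℝ) * hs
  refine ⟨?_, hval⟩
  -- the half-width function
  set H : ℝ → ℝ := fun x => min (s - (1 + s) * |x|) ((s - |x|) * (s - 1)) with hHdef
  have hHc : Continuous H := by
    apply Continuous.min
    · exact continuous_const.sub (continuous_const.mul continuous_abs)
    · exact (continuous_const.sub continuous_abs).mul continuous_const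
  -- rewrite the set
  have hset : {p : ℝ × ℝ |
      |p.1 / s + 0 / s| + |p.2 / s - 0 / s|
        + |(p.1 - p.2 - 0 - 0) / 2| + |(p.1 + p.2 - 0 + 0) / 2| ≤ 1}
      = {p : ℝ × ℝ | p.2 ∈ Set.Icc (-(H p.1)) (H p.1)} := by
    ext ⟨x, y⟩
    simp only [Set.mem_setOf_eq, Set.mem_Icc, ← abs_le, zero_div, add_zero, sub_zero]
    have hax : |x / s| = |x| / s := by rw [abs_div, abs_of_pos hs0]
    have hay : |y / s| = |y| / s := by rw [abs_div, abs_of_pos hs0]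
    have hd1 : |(x - y) / 2| = |x - y| / 2 := by rw [abs_div]; norm_num
    have hd2 : |(x + y) / 2| = |x + y| / 2 := by rw [abs_div]; norm_num
    rw [hax, hay, hd1, hd2, hHdef]
    have hm := habs x y
    set a := |x| with hadef
    set b := |y| with hbdef
    have ha0 : 0 ≤ a := abs_nonneg x
    have hb0 : 0 ≤ b := abs_nonneg y
    have h1s : (0:ℝ) < 1 + s := by linarith
    have hdiv : ∀ z : ℝ, z / s = z * s / 2 := by
      intro z
      rw [div_eq_div_iff hs0.ne' (by norm_num : (2:ℝ) ≠ 0)]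
      linear_combination (-z) * hs
    rw [hdiv a, hdiv b]
    have hfact : (1 + s) * ((s - a) * (s - 1)) = s - a := by linear_combination (s - a) * hs
    rw [le_min_iff]
    constructor
    · intro h
      have h2 : s * a + s * b + (|x - y| + |x + y|) ≤ 2 := by linarith
      rw [hm] at h2
      obtain hmx | hmx := max_cases a b
      · rw [hmx.1] at h2
        have t1 := mul_le_mul_of_nonneg_left h2 hs0.le
        have hexp : s * (s * a + s * b + 2 * a) = 2 * a + 2 * b + 2 * (s * a) := by
          linear_combination a * hs + b * hs
        have key : a + b + s * a ≤ s := by linarith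
        refine ⟨by linarith, ?_⟩
        have hsb : s * b ≤ s * a := mul_le_mul_of_nonneg_left hmx.2 hs0.le
        have h3 : (1 + s) * b ≤ (1 + s) * ((s - a) * (s - 1)) := by
          rw [hfact]; linarith
        exact le_of_mul_le_mul_left h3 h1s
      · rw [hmx.1] at h2
        have t1 := mul_le_mul_of_nonneg_left h2 hs0.le
        have hexp : s * (s * a + s * b + 2 * b) = 2 * a + 2 * b + 2 * (s * b) := by
          linear_combination a * hs + b * hs
        have key : a + b + s * b ≤ s := by linarith
        have hsa : s * a ≤ s * b := mul_le_mul_of_nonneg_left hmx.2.le hs0.le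
        refine ⟨by linarith, ?_⟩
        have h3 : (1 + s) * b ≤ (1 + s) * ((s - a) * (s - 1)) := by
          rw [hfact]; linarith
        exact le_of_mul_le_mul_left h3 h1s
    · rintro ⟨h1, h2⟩
      show a * s / 2 + b * s / 2 + |x - y| / 2 + |x + y| / 2 ≤ 1
      have h2' : b + s * b + a ≤ s := by
        have h4 : (1 + s) * b ≤ (1 + s) * ((s - a) * (s - 1)) :=
          mul_le_mul_of_nonneg_left h2 h1s.le
        rw [hfact] at h4
        linarith
      obtain hmx | hmx := max_cases a b
      · rw [hmx.1] at hm
        have key : a + b + s * a ≤ s := by linarith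
        have t1 := mul_le_mul_of_nonneg_left key hs0.le
        have hexp : s * (a + b + s * a) = s * a + s * b + 2 * a := by
          linear_combination a * hs
        linarith
      · rw [hmx.1] at hm
        have t1 := mul_le_mul_of_nonneg_left h2' hs0.le
        have hexp : s * (b + s * b + a) = s * b + 2 * b + s * a := by
          linear_combination b * hs
        linarith
  rw [hset]
  -- measurability
  have hmeas : MeasurableSet {p : ℝ × ℝ | p.2 ∈ Set.Icc (-(H p.1)) (H p.1)} := by
    have : IsClosed {p : ℝ × ℝ | p.2 ∈ Set.Icc (-(H p.1)) (H p.1)} := by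
      have h1 : IsClosed {p : ℝ × ℝ | -(H p.1) ≤ p.2} :=
        isClosed_le ((hHc.comp continuous_fst).neg) continuous_snd
      have h2 : IsClosed {p : ℝ × ℝ | p.2 ≤ H p.1} :=
        isClosed_le continuous_snd (hHc.comp continuous_fst)
      exact (h1.inter h2)
    exact this.measurableSet
  rw [Measure.volume_eq_prod, Measure.prod_apply hmeas]
  have hslice : ∀ x : ℝ, (Prod.mk x ⁻¹' {p : ℝ × ℝ | p.2 ∈ Set.Icc (-(H p.1)) (H p.1)})
      = Set.Icc (-(H x)) (H x) := fun x => rfl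
  simp_rw [hslice, Real.volume_Icc, sub_neg_eq_add, ← two_mul]
  -- pass to a nonnegative compactly supported function
  set G : ℝ → ℝ := fun x => 2 * max (H x) 0 with hGdef
  have hGc : Continuous G := continuous_const.mul (hHc.max continuous_const)
  have hGofReal : ∀ x : ℝ, ENNReal.ofReal (2 * H x) = ENNReal.ofReal (G x) := by
    intro x
    rcases le_total 0 (H x) with h | h
    · simp only [hGdef, max_eq_left h]
    · rw [ENNReal.ofReal_of_nonpos (by linarith)]
      simp only [hGdef, max_eq_right h, mul_zero, ENNReal.ofReal_zero]
  simp_rw [hGofReal]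
  have hGnn : 0 ≤ᵐ[volume] G := Filter.Eventually.of_forall fun x => by
    simp only [hGdef]; positivity
  have hGsupp : ∀ x : ℝ, x ∉ Set.Icc (-(2 - s)) (2 - s) → G x = 0 := by
    intro x hx
    have hax : 2 - s < |x| := by
      simp only [Set.mem_Icc, not_and_or, not_le] at hx
      rcases hx with h | h
      · calc 2 - s < -x := by linarith
          _ ≤ |x| := neg_le_abs x
      · exact lt_of_lt_of_le h (le_abs_self x)
    have hH : H x < 0 := by
      have : s - (1 + s) * |x| < 0 := by nlinarith
      exact lt_of_le_of_lt (min_le_left _ _) this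
    simp only [hGdef, max_eq_right hH.le, mul_zero]
  have hGcs : HasCompactSupport G :=
    HasCompactSupport.intro isCompact_Icc hGsupp
  have hGint : Integrable G := hGc.integrable_of_hasCompactSupport hGcs
  rw [← ofReal_integral_eq_lintegral_ofReal hGint hGnn]
  -- compute the integral
  have hle1 : -(2 - s) ≤ -(s - 1) := by linarith
  have hle2 : -(s - 1) ≤ (0 : ℝ) := by linarith
  have hle3 : (0 : ℝ) ≤ s - 1 := by linarith
  have hle4 : s - 1 ≤ 2 - s := by linarith
  have hII : ∀ a b : ℝ, IntervalIntegrable G volume a b := fun a b =>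
    hGc.intervalIntegrable a b
  have hsplit : ∫ x, G x = ∫ x in (-(2 - s))..(2 - s), G x := by
    rw [← setIntegral_eq_integral_of_forall_compl_eq_zero hGsupp,
      MeasureTheory.integral_Icc_eq_integral_Ioc,
      ← intervalIntegral.integral_of_le (by linarith : -(2 - s) ≤ 2 - s)]
  have e1 : (∫ x in (-(2 - s))..(-(s - 1)), G x) + ∫ x in (-(s - 1))..0, G x
      = ∫ x in (-(2 - s))..0, G x :=
    intervalIntegral.integral_add_adjacent_intervals (hII _ _) (hII _ _)
  have e2 : (∫ x in (0:ℝ)..(s - 1), G x) + ∫ x in (s - 1)..(2 - s), G x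
      = ∫ x in (0:ℝ)..(2 - s), G x :=
    intervalIntegral.integral_add_adjacent_intervals (hII _ _) (hII _ _)
  have e3 : (∫ x in (-(2 - s))..0, G x) + ∫ x in (0:ℝ)..(2 - s), G x
      = ∫ x in (-(2 - s))..(2 - s), G x :=
    intervalIntegral.integral_add_adjacent_intervals (hII _ _) (hII _ _)
  -- piecewise formulas
  have p1 : ∫ x in (-(2 - s))..(-(s - 1)), G x
      = ∫ x in (-(2 - s))..(-(s - 1)), (2 * s + (2 * (1 + s)) * x) := by
    apply intervalIntegral.integral_congr
    intro x hx
    rw [Set.uIcc_of_le hle1, Set.mem_Icc] at hx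
    have haxv : |x| = -x := abs_of_nonpos (by linarith [hx.2])
    have hH : H x = s + (1 + s) * x := by
      show min (s - (1 + s) * |x|) ((s - |x|) * (s - 1)) = _
      rw [haxv, min_eq_left (by nlinarith [hx.2] : s - (1 + s) * (-x) ≤ (s - (-x)) * (s - 1))]
      ring
    show 2 * (H x ⊔ 0) = _
    rw [hH, max_eq_left (by nlinarith [hx.1,
      mul_le_mul_of_nonneg_left hx.1 hs0.le] : (0:ℝ) ≤ s + (1 + s) * x)]
    ring
  have p2 : ∫ x in (-(s - 1))..0, G x
      = ∫ x in (-(s - 1))..0, ((4 - 2 * s) + (2 * s - 2) * x) := by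
    apply intervalIntegral.integral_congr
    intro x hx
    rw [Set.uIcc_of_le hle2, Set.mem_Icc] at hx
    have haxv : |x| = -x := abs_of_nonpos hx.2
    have hH : H x = (s - (-x)) * (s - 1) := by
      show min (s - (1 + s) * |x|) ((s - |x|) * (s - 1)) = _
      rw [haxv, min_eq_right (by nlinarith [hx.1] : (s - (-x)) * (s - 1) ≤ s - (1 + s) * (-x))]
    show 2 * (H x ⊔ 0) = _
    rw [hH, max_eq_left (mul_nonneg (by linarith [hx.1] : (0:ℝ) ≤ s - (-x)) (by linarith))]
    linear_combination 2 * hs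
  have p3 : ∫ x in (0:ℝ)..(s - 1), G x
      = ∫ x in (0:ℝ)..(s - 1), ((4 - 2 * s) + (2 - 2 * s) * x) := by
    apply intervalIntegral.integral_congr
    intro x hx
    rw [Set.uIcc_of_le hle3, Set.mem_Icc] at hx
    have haxv : |x| = x := abs_of_nonneg hx.1
    have hH : H x = (s - x) * (s - 1) := by
      show min (s - (1 + s) * |x|) ((s - |x|) * (s - 1)) = _
      rw [haxv, min_eq_right (by nlinarith [hx.2] : (s - x) * (s - 1) ≤ s - (1 + s) * x)]
    show 2 * (H x ⊔ 0) = _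
    rw [hH, max_eq_left (mul_nonneg (by linarith [hx.2] : (0:ℝ) ≤ s - x) (by linarith))]
    linear_combination 2 * hs
  have p4 : ∫ x in (s - 1)..(2 - s), G x
      = ∫ x in (s - 1)..(2 - s), (2 * s + (-(2 * (1 + s))) * x) := by
    apply intervalIntegral.integral_congr
    intro x hx
    rw [Set.uIcc_of_le hle4, Set.mem_Icc] at hx
    have haxv : |x| = x := abs_of_nonneg (by linarith [hx.1])
    have hH : H x = s - (1 + s) * x := by
      show min (s - (1 + s) * |x|) ((s - |x|) * (s - 1)) = _
      rw [haxv, min_eq_left (by nlinarith [hx.1] : s - (1 + s) * x ≤ (s - x) * (s - 1))]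
    show 2 * (H x ⊔ 0) = _
    rw [hH, max_eq_left (by nlinarith [hx.2,
      mul_le_mul_of_nonneg_left hx.2 hs0.le] : (0:ℝ) ≤ s - (1 + s) * x)]
    ring
  have hintval : ∫ x, G x = 12 * s - 16 := by
    rw [hsplit, ← e3, ← e1, ← e2, p1, p2, p3, p4, lin_int, lin_int, lin_int, lin_int]
    linear_combination (-2 * s - 2) * hs
  rw [hintval, hval]
end

section
/- Define T(ε) = 8(1+ε²)/((√2+1−ε+√2ε)(√2+2−2ε+√2ε)). Then T(ε) = 12√2 − 16 + (408√2 − 576)ε² + o(ε²) as ε → 0. -/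
open Real Filter

theorem stmt_8 :
    Filter.Tendsto
      (fun ε : ℝ =>
        (8 * (1 + ε^2) / ((Real.sqrt 2 + 1 - ε + Real.sqrt 2 * ε)
            * (Real.sqrt 2 + 2 - 2 * ε + Real.sqrt 2 * ε))
          - (12 * Real.sqrt 2 - 16) - (408 * Real.sqrt 2 - 576) * ε^2) / ε^2)
      (nhdsWithin 0 {0}ᶜ) (nhds 0) := by
  have hs : Real.sqrt 2 ^ 2 = 2 := Real.sq_sqrt (by norm_num)
  have hs1 : (1:ℝ) < Real.sqrt 2 := by nlinarith [Real.sqrt_nonneg 2]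
  have hs2 : Real.sqrt 2 < 1.5 := by nlinarith [Real.sqrt_nonneg 2]
  set s := Real.sqrt 2 with hsdef
  set g : ℝ → ℝ := fun ε => (4752 - 3360*s) * ε^2 / ((4 + 3*s) + (4 - 3*s)*ε^2)
    with hg
  have hD : ∀ ε : ℝ, |ε| ≤ 1 → (0:ℝ) < (4 + 3*s) + (4 - 3*s)*ε^2 := by
    intro ε hε
    have h1 : ε^2 ≤ 1 := by
      have := abs_nonneg ε
      nlinarith [sq_abs ε]
    nlinarith [sq_nonneg ε]
  have hgt : Filter.Tendsto g (nhdsWithin 0 {0}ᶜ) (nhds 0) := by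
    have hc : ContinuousAt g 0 := by
      apply ContinuousAt.div
      · fun_prop
      · fun_prop
      · simpa using (hD 0 (by norm_num)).ne'
    have h0 : g 0 = 0 := by simp [hg]
    have ht := hc.tendsto.mono_left (nhdsWithin_le_nhds (s := {0}ᶜ))
    rwa [h0] at ht
  apply hgt.congr'
  have h1 : ∀ᶠ ε in nhdsWithin (0:ℝ) {0}ᶜ, ε ≠ 0 := by
    filter_upwards [self_mem_nhdsWithin] with ε hε using hε
  have h2 : ∀ᶠ ε in nhdsWithin (0:ℝ) {0}ᶜ, |ε| < 1 := by
    apply eventually_nhdsWithin_of_eventually_nhds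
    have : Metric.ball (0:ℝ) 1 ∈ nhds (0:ℝ) := Metric.ball_mem_nhds _ (by norm_num)
    filter_upwards [this] with ε hε
    simpa [Real.dist_eq] using hε
  filter_upwards [h1, h2] with ε hne hlt
  have hDpos := hD ε hlt.le
  have hP : (s + 1 - ε + s * ε) * (s + 2 - 2 * ε + s * ε)
      = (4 + 3*s) + (4 - 3*s)*ε^2 := by
    linear_combination (1 + 2*ε + ε^2) * hs
  have hPne : (s + 1 - ε + s * ε) * (s + 2 - 2 * ε + s * ε) ≠ 0 := by
    rw [hP]; exact hDpos.ne'
  rw [hg]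
  have hD2 : 4 + s * 3 + ε ^ 2 * (4 - s * 3) ≠ 0 := by linarith
  rw [hP]
  field_simp
  linear_combination (36 + 1188*ε^2 - 1224*ε^4) * hs
end

section
/- A point with coordinates (x/√(1+ε²), y/√(1+ε²), −εx/√(1+ε²), εy/√(1+ε²)) belongs to the set C if and only if √2(1−ε)(|x|+|y|) + (1+ε)(|x+y|+|x−y|) ≤ 2√(1+ε²). -/
open Real

theorem stmt_9 (ε : ℝ) (hε : ε ∈ Set.Ioo (0:ℝ) 1) (x y : ℝ) :
    (let p : Fin 4 → ℝ := ![x / Real.sqrt (1 + ε^2), y / Real.sqrt (1 + ε^2),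
        -ε * x / Real.sqrt (1 + ε^2), ε * y / Real.sqrt (1 + ε^2)];
      |p 0 / Real.sqrt 2 + p 2 / Real.sqrt 2| + |p 1 / Real.sqrt 2 - p 3 / Real.sqrt 2|
        + |(p 0 - p 1 - p 2 - p 3) / 2| + |(p 0 + p 1 - p 2 + p 3) / 2| ≤ 1)
    ↔ Real.sqrt 2 * (1 - ε) * (|x| + |y|) + (1 + ε) * (|x + y| + |x - y|)
        ≤ 2 * Real.sqrt (1 + ε^2) := by
  obtain ⟨hε0, hε1⟩ := hε
  have hs : (0:ℝ) < Real.sqrt (1 + ε^2) := Real.sqrt_pos.2 (by positivity)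
  have h2 : (0:ℝ) < Real.sqrt 2 := by positivity
  have h2sq : Real.sqrt 2 * Real.sqrt 2 = 2 := Real.mul_self_sqrt (by norm_num)
  have h1e : (0:ℝ) ≤ 1 - ε := by linarith
  have h1e' : (0:ℝ) ≤ 1 + ε := by linarith
  simp only [Matrix.cons_val_zero, Matrix.cons_val_one, Matrix.head_cons,
    Matrix.cons_val_two, Matrix.tail_cons, Matrix.cons_val_three]
  have e1 : x / Real.sqrt (1 + ε^2) / Real.sqrt 2 + (-ε * x / Real.sqrt (1 + ε^2)) / Real.sqrt 2
      = ((1 - ε) * x) / (Real.sqrt 2 * Real.sqrt (1 + ε^2)) := by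
    field_simp; ring
  have e2 : y / Real.sqrt (1 + ε^2) / Real.sqrt 2 - (ε * y / Real.sqrt (1 + ε^2)) / Real.sqrt 2
      = ((1 - ε) * y) / (Real.sqrt 2 * Real.sqrt (1 + ε^2)) := by
    field_simp
  have e3 : (x / Real.sqrt (1 + ε^2) - y / Real.sqrt (1 + ε^2)
      - (-ε * x / Real.sqrt (1 + ε^2)) - ε * y / Real.sqrt (1 + ε^2)) / 2
      = ((1 + ε) * (x - y)) / (2 * Real.sqrt (1 + ε^2)) := by
    field_simp; ring
  have e4 : (x / Real.sqrt (1 + ε^2) + y / Real.sqrt (1 + ε^2)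
      - (-ε * x / Real.sqrt (1 + ε^2)) + ε * y / Real.sqrt (1 + ε^2)) / 2
      = ((1 + ε) * (x + y)) / (2 * Real.sqrt (1 + ε^2)) := by
    field_simp; ring
  rw [e1, e2, e3, e4]
  simp only [abs_div, abs_mul, abs_of_nonneg h1e, abs_of_nonneg h1e', abs_of_pos h2,
    abs_of_pos hs, abs_of_pos (show (0:ℝ) < 2 by norm_num)]
  have key : ∀ t : ℝ, t / (Real.sqrt 2 * Real.sqrt (1 + ε^2))
      = Real.sqrt 2 * t / (2 * Real.sqrt (1 + ε^2)) := fun t => by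
    rw [div_eq_div_iff (by positivity) (by positivity)]
    linear_combination -t * Real.sqrt (1 + ε^2) * h2sq
  rw [key, key, ← add_div, ← add_div, ← add_div,
    div_le_one (by positivity)]
  constructor <;> intro h <;> nlinarith [h]
end
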